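/- Fix t ∈ ℂ and define D(x,y) = 4y² + 4x⁻¹y + x⁻² − x⁻¹(4x² + t)² for x ≠ 0. Let M, N ≥ 0 be integers, f₀, …, f_M ∈ ℂ[ξ] and g₀, …, g_N ∈ ℂ[ξ], and define for x ≠ 0: H⁺(x,y) = Σ_{m=0}^{M} f_m(x⁻¹) D(x,y)^m and H⁻(x,y) = (2x⁻²y + x⁻³) Σ_{n=0}^{N} g_n(x⁻¹) D(x,y)^n. If there exists a polynomial H ∈ ℂ[x,y] with H(x,y) = H⁺(x,y) + H⁻(x,y) for all x ≠ 0 and all y ∈ ℂ, then H is a constant polynomial; equivalently, there is c ∈ ℂ with H⁺(x,y) + H⁻(x,y) = c for all x ≠ 0 and y ∈ ℂ. -/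

import Mathlib

noncomputable section NFAux
namespace NFAux
open Polynomial Finset


/-- evaluation of a bivariate polynomial (outer var `u`, inner var `x`). -/
def ev (x u : ℂ) : Polynomial (Polynomial ℂ) →+* ℂ :=
  Polynomial.eval₂RingHom (Polynomial.evalRingHom x) u

@[simp] lemma ev_C (x u : ℂ) (p : Polynomial ℂ) : ev x u (C p) = p.eval x := by
  simp [ev]

@[simp] lemma ev_X (x u : ℂ) : ev x u X = u := by simp [ev]

lemma eval_ne_zero_eq_zero (p : Polynomial ℂ) (h : ∀ x : ℂ, x ≠ 0 → p.eval x = 0) :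
    p = 0 := by
  apply p.eq_zero_of_infinite_isRoot
  apply Set.Infinite.mono (s := {(0:ℂ)}ᶜ)
  · intro x hx; exact h x hx
  · exact Set.Finite.infinite_compl (Set.finite_singleton 0)

lemma biv_eq_zero (P : Polynomial (Polynomial ℂ))
    (h : ∀ x u : ℂ, x ≠ 0 → ev x u P = 0) : P = 0 := by
  ext j a
  suffices hj : P.coeff j = 0 by simp [hj]
  apply eval_ne_zero_eq_zero
  intro x hx
  have hmap : P.map (Polynomial.evalRingHom x) = 0 := by
    apply Polynomial.funext (q := 0)
    intro u
    have := h x u hx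
    rw [ev, coe_eval₂RingHom, Polynomial.eval₂_eq_eval_map] at this
    simpa using this
  have := congrArg (fun q => Polynomial.coeff q j) hmap
  simpa [Polynomial.coeff_map] using this



def c0 (t : ℂ) : Polynomial ℂ := 1 - X * (4 * X ^ 2 + C t) ^ 2

def Dq (t : ℂ) : Polynomial (Polynomial ℂ) := C 4 * X ^ 2 + C 4 * X + C (c0 t)

lemma Dq_natDegree (t : ℂ) : (Dq t).natDegree = 2 := by
  apply Polynomial.natDegree_quadratic; norm_num

lemma Dq_leadingCoeff (t : ℂ) : (Dq t).leadingCoeff = 4 := by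
  apply Polynomial.leadingCoeff_quadratic; norm_num

lemma Dq_coeff_two (t : ℂ) : (Dq t).coeff 2 = 4 := by
  have := Dq_leadingCoeff t
  rwa [Polynomial.leadingCoeff, Dq_natDegree] at this

lemma Dq_coeff_one (t : ℂ) : (Dq t).coeff 1 = 4 := by
  simp [Dq, coeff_C]

lemma Dq_pow_natDegree (t : ℂ) (m : ℕ) : ((Dq t) ^ m).natDegree = 2 * m := by
  rw [Polynomial.natDegree_pow, Dq_natDegree]; ring

lemma Dq_pow_coeff_hi (t : ℂ) (m j : ℕ) (h : 2 * m < j) : ((Dq t) ^ m).coeff j = 0 := by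
  apply Polynomial.coeff_eq_zero_of_natDegree_lt
  rwa [Dq_pow_natDegree]

lemma Dq_pow_coeff_top (t : ℂ) (m : ℕ) : ((Dq t) ^ m).coeff (2 * m) = 4 ^ m := by
  have h1 : ((Dq t) ^ m).coeff (2 * m) = ((Dq t) ^ m).leadingCoeff := by
    rw [Polynomial.leadingCoeff, Dq_pow_natDegree]
  rw [h1, Polynomial.leadingCoeff_pow, Dq_leadingCoeff]

lemma Dq_pow_coeff_sub (t : ℂ) (m : ℕ) :
    ((Dq t) ^ (m + 1)).coeff (2 * m + 1) = ((m : Polynomial ℂ) + 1) * 4 ^ (m + 1) := by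
  induction m with
  | zero => simpa using Dq_coeff_one t
  | succ m ih =>
    have hexp : (Dq t) ^ (m + 2) = (Dq t) ^ (m + 1) * (C 4 * X ^ 2) +
        ((Dq t) ^ (m + 1) * (C 4 * X) + (Dq t) ^ (m + 1) * C (c0 t)) := by
      rw [pow_succ, Dq]; ring
    have e1 : ((Dq t) ^ (m+1) * (C 4 * X ^ 2)).coeff (2 * (m+1) + 1)
        = ((Dq t) ^ (m+1)).coeff (2 * m + 1) * 4 := by
      have : (Dq t) ^ (m+1) * (C 4 * X ^ 2) = ((Dq t) ^ (m+1) * C 4) * X ^ 2 := by ring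
      rw [this]
      have h2 : 2 * (m+1) + 1 = (2 * m + 1) + 2 := by ring
      rw [h2, Polynomial.coeff_mul_X_pow, Polynomial.coeff_mul_C]
    have e2 : ((Dq t) ^ (m+1) * (C 4 * X)).coeff (2 * (m+1) + 1)
        = ((Dq t) ^ (m+1)).coeff (2 * (m + 1)) * 4 := by
      have : (Dq t) ^ (m+1) * (C 4 * X) = ((Dq t) ^ (m+1) * C 4) * X ^ 1 := by ring
      rw [this]
      have h2 : 2 * (m+1) + 1 = (2 * (m+1)) + 1 := by ring
      rw [h2, Polynomial.coeff_mul_X_pow, Polynomial.coeff_mul_C]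
    have e3 : ((Dq t) ^ (m+1) * C (c0 t)).coeff (2 * (m+1) + 1) = 0 := by
      rw [Polynomial.coeff_mul_C, Dq_pow_coeff_hi t (m+1) _ (by omega), zero_mul]
    rw [hexp, Polynomial.coeff_add, Polynomial.coeff_add, e1, e2, e3, ih,
      Dq_pow_coeff_top]
    push_cast
    ring


def Psi (t : ℂ) (F G : ℕ → Polynomial ℂ) (M N : ℕ) : Polynomial (Polynomial ℂ) :=
  (∑ m ∈ range M, C (F m) * Dq t ^ m) +
    (C 2 * X + 1) * ∑ n ∈ range N, C (G n) * Dq t ^ n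

lemma four_pow_eq (e : ℕ) : ((4 : Polynomial ℂ) ^ e) = C ((4:ℂ) ^ e) := by
  rw [Polynomial.C_pow, map_ofNat]

lemma two_eq_C : (2 : Polynomial ℂ) = C 2 := (map_ofNat _ 2).symm

lemma sum_coeff_single (t : ℂ) (P : ℕ → Polynomial ℂ) (M j m₀ : ℕ) (hm : m₀ < M)
    (hz : ∀ m, m < M → m ≠ m₀ → (Dq t ^ m).coeff j = 0) :
    (∑ m ∈ range M, C (P m) * Dq t ^ m).coeff j = P m₀ * (Dq t ^ m₀).coeff j := by
  rw [finset_sum_coeff]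
  rw [Finset.sum_eq_single_of_mem m₀ (mem_range.2 hm)]
  · rw [Polynomial.coeff_C_mul]
  · intro m hm' hne
    rw [Polynomial.coeff_C_mul, hz m (mem_range.1 hm') hne, mul_zero]

lemma sum_coeff_zero (t : ℂ) (P : ℕ → Polynomial ℂ) (M j : ℕ)
    (hz : ∀ m, m < M → (Dq t ^ m).coeff j = 0) :
    (∑ m ∈ range M, C (P m) * Dq t ^ m).coeff j = 0 := by
  rw [finset_sum_coeff]
  apply Finset.sum_eq_zero
  intro m hm
  rw [Polynomial.coeff_C_mul, hz m (mem_range.1 hm), mul_zero]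

lemma coeff_lin_mul (Q : Polynomial (Polynomial ℂ)) (j : ℕ) :
    ((C 2 * X + 1) * Q).coeff (j + 1) = 2 * Q.coeff j + Q.coeff (j + 1) := by
  have h : (C 2 * X + 1) * Q = C 2 * (X * Q) + Q := by ring
  rw [h, Polynomial.coeff_add, Polynomial.coeff_C_mul, Polynomial.coeff_X_mul]

lemma psi_coeff (t : ℂ) (F G : ℕ → Polynomial ℂ) (M N : ℕ) (j : ℕ) :
    (Psi t F G M N).coeff (j + 1) =
      (∑ m ∈ range M, C (F m) * Dq t ^ m).coeff (j + 1) +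
      (2 * (∑ n ∈ range N, C (G n) * Dq t ^ n).coeff j +
        (∑ n ∈ range N, C (G n) * Dq t ^ n).coeff (j + 1)) := by
  rw [Psi, Polynomial.coeff_add, coeff_lin_mul]


lemma scal_ne (M'' : ℕ) : (((M'' : ℂ)+1) * 4^(M''+1)) ≠ 0 :=
  mul_ne_zero (Nat.cast_add_one_ne_zero M'') (pow_ne_zero _ (by norm_num))

lemma core (t : ℂ) (R : ℕ) : ∀ K M N (F G : ℕ → Polynomial ℂ), M + N ≤ K →
    (∀ m, m < M → ∀ k, R < 2*m + k → (F m).coeff k = 0) →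
    (∀ n, n < N → ∀ k, R < 2*n + 3 + k → (G n).coeff k = 0) →
    (∀ j a, j + a < R → ((Psi t F G M N).coeff j).coeff a = 0) →
    ∃ c : ℂ, Psi t F G M N = C (Polynomial.C c * Polynomial.X ^ R) := by
  intro K
  induction K with
  | zero =>
    intro M N F G hMN hF hG hHM
    have hM : M = 0 := by omega
    have hN : N = 0 := by omega
    subst hM; subst hN
    exact ⟨0, by simp [Psi]⟩
  | succ K ih =>
    intro M N F G hMN hF hG hHM
    by_cases hb : 1 ≤ N ∧ M ≤ N
    · obtain ⟨N', rfl⟩ : ∃ N', N = N' + 1 := ⟨N - 1, by omega⟩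
      have htop : (Dq t ^ N').coeff (2 * N') = 4 ^ N' := Dq_pow_coeff_top t N'
      have row : (Psi t F G M (N' + 1)).coeff (2 * N' + 1)
          = 2 * (G N' * (4 : Polynomial ℂ) ^ N') := by
        rw [psi_coeff]
        rw [sum_coeff_zero t F M ((2*N')+1) (fun m hm => Dq_pow_coeff_hi t m _ (by omega))]
        rw [sum_coeff_single t G (N'+1) (2*N') N' (by omega)
          (fun n hn hne => Dq_pow_coeff_hi t n _ (by omega))]
        rw [sum_coeff_zero t G (N'+1) ((2*N')+1) (fun n hn => Dq_pow_coeff_hi t n _ (by omega))]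
        rw [htop]
        ring
      have hGN : G N' = 0 := by
        ext a
        rw [Polynomial.coeff_zero]
        rcases lt_or_ge (2*N'+1+a) R with hlt | hge
        · have h0 := hHM (2*N'+1) a (by omega)
          rw [row] at h0
          rw [four_pow_eq, two_eq_C, Polynomial.coeff_C_mul, Polynomial.coeff_mul_C] at h0
          rcases mul_eq_zero.mp h0 with h | h
          · exact absurd h (by norm_num)
          · rcases mul_eq_zero.mp h with h' | h'
            · exact h'
            · exact absurd h' (pow_ne_zero _ (by norm_num))
        · exact hG N' (by omega) a (by omega)
      have hPsiEq : Psi t F G M (N'+1) = Psi t F G M N' := by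
        unfold Psi
        rw [Finset.sum_range_succ, hGN]
        simp
      obtain ⟨c, hc⟩ := ih M N' F G (by omega) hF
        (fun n hn k hk => hG n (by omega) k hk)
        (fun j a h => by rw [← hPsiEq]; exact hHM j a h)
      exact ⟨c, by rw [hPsiEq, hc]⟩
    · by_cases ha : 2 ≤ M
      · obtain ⟨M'', rfl⟩ : ∃ M'', M = M'' + 2 := ⟨M - 2, by omega⟩
        have hNle : N ≤ M'' + 1 := by omega
        have htop1 : (Dq t ^ (M''+1)).coeff ((2*M''+1)+1) = 4 ^ (M''+1) := by
          have h := Dq_pow_coeff_top t (M''+1)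
          rwa [show 2*(M''+1) = (2*M''+1)+1 by ring] at h
        have row1 : (Psi t F G (M''+2) N).coeff ((2*M''+1)+1)
            = F (M''+1) * (4:Polynomial ℂ) ^ (M''+1) := by
          rw [psi_coeff]
          rw [sum_coeff_single t F (M''+2) ((2*M''+1)+1) (M''+1) (by omega)
            (fun m hm hne => Dq_pow_coeff_hi t m _ (by omega))]
          rw [sum_coeff_zero t G N (2*M''+1) (fun n hn => Dq_pow_coeff_hi t n _ (by omega))]
          rw [sum_coeff_zero t G N ((2*M''+1)+1) (fun n hn => Dq_pow_coeff_hi t n _ (by omega))]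
          rw [htop1]
          ring
        have hQG : (∑ n ∈ range N, C (G n) * Dq t ^ n).coeff (2*M'')
            = if M'' < N then G M'' * (4:Polynomial ℂ)^M'' else 0 := by
          by_cases h : M'' < N
          · rw [if_pos h, sum_coeff_single t G N (2*M'') M'' h
              (fun n hn hne => Dq_pow_coeff_hi t n _ (by omega)), Dq_pow_coeff_top]
          · rw [if_neg h]
            exact sum_coeff_zero t G N (2*M'') (fun n hn => Dq_pow_coeff_hi t n _ (by omega))
        have row2 : (Psi t F G (M''+2) N).coeff ((2*M'')+1)
            = F (M''+1) * (((M'' : Polynomial ℂ)+1) * 4^(M''+1))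
              + 2 * (if M'' < N then G M'' * (4:Polynomial ℂ)^M'' else 0) := by
          rw [psi_coeff]
          rw [sum_coeff_single t F (M''+2) ((2*M'')+1) (M''+1) (by omega)
            (fun m hm hne => Dq_pow_coeff_hi t m _ (by omega))]
          rw [sum_coeff_zero t G N ((2*M'')+1) (fun n hn => Dq_pow_coeff_hi t n _ (by omega))]
          rw [hQG, Dq_pow_coeff_sub]
          ring
        have hsc : ((M'' : Polynomial ℂ)+1) * (4:Polynomial ℂ)^(M''+1)
            = C (((M'' : ℂ)+1) * 4^(M''+1)) := by
          rw [map_mul, map_add, map_one, Polynomial.C_eq_natCast, four_pow_eq]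
        have hF1 : F (M''+1) = 0 := by
          ext a
          rw [Polynomial.coeff_zero]
          rcases lt_trichotomy (2*(M''+1)+a) R with h | h | h
          · have h0 := hHM ((2*M''+1)+1) a (by omega)
            rw [row1] at h0
            rw [four_pow_eq, Polynomial.coeff_mul_C] at h0
            rcases mul_eq_zero.mp h0 with h' | h'
            · exact h'
            · exact absurd h' (pow_ne_zero _ (by norm_num))
          · have h0 := hHM ((2*M'')+1) a (by omega)
            rw [row2] at h0
            rw [Polynomial.coeff_add, hsc, Polynomial.coeff_mul_C] at h0
            by_cases hMN' : M'' < N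
            · rw [if_pos hMN'] at h0
              have hg0 : (G M'').coeff a = 0 := hG M'' hMN' a (by omega)
              rw [four_pow_eq, two_eq_C, Polynomial.coeff_C_mul, Polynomial.coeff_mul_C,
                hg0] at h0
              simp only [zero_mul, mul_zero, add_zero] at h0
              exact (mul_eq_zero.mp h0).resolve_right (scal_ne M'')
            · rw [if_neg hMN'] at h0
              simp only [mul_zero, Polynomial.coeff_zero, add_zero] at h0
              exact (mul_eq_zero.mp h0).resolve_right (scal_ne M'')
          · exact hF (M''+1) (by omega) a (by omega)
        have hPsiEq : Psi t F G (M''+2) N = Psi t F G (M''+1) N := by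
          unfold Psi
          rw [Finset.sum_range_succ, hF1]
          simp
        obtain ⟨c, hc⟩ := ih (M''+1) N F G (by omega)
          (fun m hm k hk => hF m (by omega) k hk) hG
          (fun j a h => by rw [← hPsiEq]; exact hHM j a h)
        exact ⟨c, by rw [hPsiEq, hc]⟩
      · have hN : N = 0 := by omega
        subst hN
        rcases Nat.lt_or_ge M 1 with hM | hM
        · have : M = 0 := by omega
          subst this
          exact ⟨0, by simp [Psi]⟩
        · have hM1 : M = 1 := by omega
          subst hM1
          have hPsi : Psi t F G 1 0 = C (F 0) := by simp [Psi]
          refine ⟨(F 0).coeff R, ?_⟩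
          rw [hPsi]
          congr 1
          ext a
          rw [Polynomial.coeff_C_mul, Polynomial.coeff_X_pow]
          rcases lt_trichotomy a R with h | h | h
          · have h0 := hHM 0 a (by omega)
            rw [hPsi, Polynomial.coeff_C] at h0
            simp at h0
            simp [h0, ne_of_lt h]
          · subst h
            simp
          · have h0 := hF 0 (by omega) a (by omega)
            simp [h0, (ne_of_gt h)]


end NFAux
end NFAux

open MvPolynomial NFAux

theorem normal_form_polynomial_is_constant (t : ℂ) (M N : ℕ)
    (f g : ℕ → Polynomial ℂ)
    (H : MvPolynomial (Fin 2) ℂ)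
    (hH : ∀ x y : ℂ, x ≠ 0 →
      eval ![x, y] H =
        (∑ m ∈ Finset.range (M + 1), Polynomial.eval x⁻¹ (f m) *
          (4*y^2 + 4*x⁻¹*y + x⁻¹^2 - x⁻¹*(4*x^2 + t)^2)^m) +
        (2*x⁻¹^2*y + x⁻¹^3) *
          ∑ n ∈ Finset.range (N + 1), Polynomial.eval x⁻¹ (g n) *
            (4*y^2 + 4*x⁻¹*y + x⁻¹^2 - x⁻¹*(4*x^2 + t)^2)^n) :
    ∃ c : ℂ, H = C c ∧
      ∀ x y : ℂ, x ≠ 0 →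
        (∑ m ∈ Finset.range (M + 1), Polynomial.eval x⁻¹ (f m) *
          (4*y^2 + 4*x⁻¹*y + x⁻¹^2 - x⁻¹*(4*x^2 + t)^2)^m) +
        (2*x⁻¹^2*y + x⁻¹^3) *
          (∑ n ∈ Finset.range (N + 1), Polynomial.eval x⁻¹ (g n) *
            (4*y^2 + 4*x⁻¹*y + x⁻¹^2 - x⁻¹*(4*x^2 + t)^2)^n) = c := by
  classical
  obtain ⟨R, hR1, hR2, hR3⟩ : ∃ R : ℕ,
      (∀ m, m ≤ M → 2*m + (f m).natDegree ≤ R) ∧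
      (∀ n, n ≤ N → 2*n + 3 + (g n).natDegree ≤ R) ∧
      (∀ d ∈ H.support, d 1 ≤ R) := by
    refine ⟨((Finset.range (M+1)).sup fun m => 2*m + (f m).natDegree) ⊔
      (((Finset.range (N+1)).sup fun n => 2*n + 3 + (g n).natDegree) ⊔
       (H.support.sup fun d => d 1)), ?_, ?_, ?_⟩
    · intro m hm
      exact le_sup_of_le_left (Finset.le_sup (f := fun m => 2*m + (f m).natDegree)
        (Finset.mem_range.2 (Nat.lt_succ_of_le hm)))
    · intro n hn
      exact le_sup_of_le_right (le_sup_of_le_left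
        (Finset.le_sup (f := fun n => 2*n + 3 + (g n).natDegree)
          (Finset.mem_range.2 (Nat.lt_succ_of_le hn))))
    · intro d hd
      exact le_sup_of_le_right (le_sup_of_le_right (Finset.le_sup (f := fun d => d 1) hd))
  set F : ℕ → Polynomial ℂ := fun m => ∑ k ∈ Finset.range (R+1),
    Polynomial.C ((f m).coeff k) * Polynomial.X ^ (R - (2*m + k)) with hFdef
  set G : ℕ → Polynomial ℂ := fun n => ∑ k ∈ Finset.range (R+1),
    Polynomial.C ((g n).coeff k) * Polynomial.X ^ (R - (2*n + 3 + k)) with hGdef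
  have hFbound : ∀ m, m < M + 1 → ∀ k', R < 2*m + k' → (F m).coeff k' = 0 := by
    intro m hm k' hk'
    simp only [hFdef]
    rw [Polynomial.finset_sum_coeff]
    apply Finset.sum_eq_zero
    intro k hk
    rw [Polynomial.coeff_C_mul, Polynomial.coeff_X_pow]
    by_cases hc : (f m).coeff k = 0
    · simp [hc]
    · have hkd : k ≤ (f m).natDegree := Polynomial.le_natDegree_of_ne_zero hc
      have h2 : 2*m + k ≤ R := le_trans (by omega) (hR1 m (by omega))
      have hne : ¬ (k' = R - (2*m + k)) := by omega
      simp [hne]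
  have hGbound : ∀ n, n < N + 1 → ∀ k', R < 2*n + 3 + k' → (G n).coeff k' = 0 := by
    intro n hn k' hk'
    simp only [hGdef]
    rw [Polynomial.finset_sum_coeff]
    apply Finset.sum_eq_zero
    intro k hk
    rw [Polynomial.coeff_C_mul, Polynomial.coeff_X_pow]
    by_cases hc : (g n).coeff k = 0
    · simp [hc]
    · have hkd : k ≤ (g n).natDegree := Polynomial.le_natDegree_of_ne_zero hc
      have h2 : 2*n + 3 + k ≤ R := le_trans (by omega) (hR2 n (by omega))
      have hne : ¬ (k' = R - (2*n + 3 + k)) := by omega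
      simp [hne]
  have hFeval : ∀ m, m ≤ M → ∀ x : ℂ, x ≠ 0 →
      Polynomial.eval x (F m) * x^(2*m) = x^R * Polynomial.eval x⁻¹ (f m) := by
    intro m hm x hx
    have hdeg : (f m).natDegree < R + 1 := by have := hR1 m hm; omega
    simp only [hFdef]
    rw [Polynomial.eval_finset_sum, Polynomial.eval_eq_sum_range' hdeg, Finset.sum_mul,
      Finset.mul_sum]
    apply Finset.sum_congr rfl
    intro k hk
    by_cases hc : (f m).coeff k = 0
    · simp [hc]
    · have hkd : k ≤ (f m).natDegree := Polynomial.le_natDegree_of_ne_zero hc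
      have h2 : 2*m + k ≤ R := le_trans (by omega) (hR1 m hm)
      rw [Polynomial.eval_mul, Polynomial.eval_C, Polynomial.eval_pow, Polynomial.eval_X]
      have hpow : x ^ (R - (2*m + k)) * x^(2*m) * x^k = x ^ R := by
        rw [← pow_add, ← pow_add]
        congr 1
        omega
      have hxk : x ^ k ≠ 0 := pow_ne_zero _ hx
      rw [← hpow, inv_pow]
      have hinv : x ^ k * (x ^ k)⁻¹ = 1 := mul_inv_cancel₀ hxk
      linear_combination (-((f m).coeff k * x ^ (R - (2*m + k)) * x^(2*m))) * hinv
  have hGeval : ∀ n, n ≤ N → ∀ x : ℂ, x ≠ 0 →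
      Polynomial.eval x (G n) * x^(2*n+3) = x^R * Polynomial.eval x⁻¹ (g n) := by
    intro n hn x hx
    have hdeg : (g n).natDegree < R + 1 := by have := hR2 n hn; omega
    simp only [hGdef]
    rw [Polynomial.eval_finset_sum, Polynomial.eval_eq_sum_range' hdeg, Finset.sum_mul,
      Finset.mul_sum]
    apply Finset.sum_congr rfl
    intro k hk
    by_cases hc : (g n).coeff k = 0
    · simp [hc]
    · have hkd : k ≤ (g n).natDegree := Polynomial.le_natDegree_of_ne_zero hc
      have h2 : 2*n + 3 + k ≤ R := le_trans (by omega) (hR2 n hn)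
      rw [Polynomial.eval_mul, Polynomial.eval_C, Polynomial.eval_pow, Polynomial.eval_X]
      have hpow : x ^ (R - (2*n+3+k)) * x^(2*n+3) * x^k = x ^ R := by
        rw [← pow_add, ← pow_add]
        congr 1
        omega
      have hxk : x ^ k ≠ 0 := pow_ne_zero _ hx
      rw [← hpow, inv_pow]
      have hinv : x ^ k * (x ^ k)⁻¹ = 1 := mul_inv_cancel₀ hxk
      linear_combination (-((g n).coeff k * x ^ (R - (2*n+3+k)) * x^(2*n+3))) * hinv
  set Phi : Polynomial (Polynomial ℂ) := ∑ d ∈ H.support,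
    Polynomial.C (Polynomial.C (MvPolynomial.coeff d H) *
      Polynomial.X ^ ((R + d 0) - d 1)) * Polynomial.X ^ (d 1) with hPhidef
  have hPhiHM : ∀ j a : ℕ, j + a < R → ((Phi.coeff j).coeff a) = 0 := by
    intro j a hja
    rw [hPhidef, Polynomial.finset_sum_coeff, Polynomial.finset_sum_coeff]
    apply Finset.sum_eq_zero
    intro d hd
    rw [Polynomial.coeff_C_mul, Polynomial.coeff_X_pow]
    by_cases hj : j = d 1
    · rw [if_pos hj, mul_one, Polynomial.coeff_C_mul, Polynomial.coeff_X_pow]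
      have hd1 : d 1 ≤ R := hR3 d hd
      have hne : ¬ (a = (R + d 0) - d 1) := by omega
      simp [hne]
    · simp [hj]
  have hPhiEval : ∀ x y : ℂ, x ≠ 0 →
      ev x (x*y) Phi = x^R * MvPolynomial.eval ![x,y] H := by
    intro x y hx
    rw [hPhidef, map_sum, MvPolynomial.eval_eq', Finset.mul_sum]
    apply Finset.sum_congr rfl
    intro d hd
    rw [map_mul, map_pow, ev_C, ev_X]
    rw [Polynomial.eval_mul, Polynomial.eval_C, Polynomial.eval_pow, Polynomial.eval_X]
    rw [Fin.prod_univ_two]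
    simp only [Matrix.cons_val_zero, Matrix.cons_val_one, Matrix.head_cons]
    have hd1 : d 1 ≤ R := hR3 d hd
    rw [mul_pow]
    have hpow : x ^ ((R + d 0) - d 1) * x ^ (d 1) = x ^ R * x ^ (d 0) := by
      rw [← pow_add, ← pow_add]
      congr 1
      omega
    calc MvPolynomial.coeff d H * x ^ ((R + d 0) - d 1) * (x ^ (d 1) * y ^ (d 1))
        = MvPolynomial.coeff d H * (x ^ ((R + d 0) - d 1) * x ^ (d 1)) * y ^ (d 1) := by
          ring
      _ = MvPolynomial.coeff d H * (x ^ R * x ^ (d 0)) * y ^ (d 1) := by rw [hpow]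
      _ = x ^ R * (MvPolynomial.coeff d H * (x ^ (d 0) * y ^ (d 1))) := by ring
  have hDqev : ∀ x y : ℂ, x ≠ 0 → ev x (x*y) (Dq t)
      = x^2 * (4*y^2 + 4*x⁻¹*y + x⁻¹^2 - x⁻¹*(4*x^2 + t)^2) := by
    intro x y hx
    rw [Dq, map_add, map_add, map_mul, map_mul, map_pow, ev_C, ev_C, ev_X]
    simp only [c0, Polynomial.eval_sub, Polynomial.eval_one, Polynomial.eval_mul,
      Polynomial.eval_pow, Polynomial.eval_add, Polynomial.eval_X, Polynomial.eval_C,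
      Polynomial.eval_ofNat]
    field_simp
    ring
  have hPsiEv : ∀ x y : ℂ, x ≠ 0 →
      ev x (x*y) (Psi t F G (M+1) (N+1)) = x^R * MvPolynomial.eval ![x,y] H := by
    intro x y hx
    rw [hH x y hx, Psi, map_add, map_mul, map_sum, map_sum, mul_add]
    congr 1
    · rw [Finset.mul_sum]
      apply Finset.sum_congr rfl
      intro m hm
      have hm' : m ≤ M := by have := Finset.mem_range.1 hm; omega
      rw [map_mul, map_pow, ev_C, hDqev x y hx, mul_pow]
      have h1 := hFeval m hm' x hx
      have hpm : (x^2 : ℂ)^m = x^(2*m) := by rw [← pow_mul]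
      calc Polynomial.eval x (F m) *
            ((x^2)^m * (4*y^2 + 4*x⁻¹*y + x⁻¹^2 - x⁻¹*(4*x^2 + t)^2)^m)
          = (Polynomial.eval x (F m) * x^(2*m)) *
            (4*y^2 + 4*x⁻¹*y + x⁻¹^2 - x⁻¹*(4*x^2 + t)^2)^m := by rw [hpm]; ring
        _ = (x^R * Polynomial.eval x⁻¹ (f m)) *
            (4*y^2 + 4*x⁻¹*y + x⁻¹^2 - x⁻¹*(4*x^2 + t)^2)^m := by rw [h1]
        _ = x^R * (Polynomial.eval x⁻¹ (f m) *
            (4*y^2 + 4*x⁻¹*y + x⁻¹^2 - x⁻¹*(4*x^2 + t)^2)^m) := by ring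
    · rw [map_add, map_mul, ev_C, ev_X, map_one]
      have hev2 : Polynomial.eval x (2 : Polynomial ℂ) = 2 := by
        simp
      rw [hev2, Finset.mul_sum, Finset.mul_sum, Finset.mul_sum]
      apply Finset.sum_congr rfl
      intro n hn
      have hn' : n ≤ N := by have := Finset.mem_range.1 hn; omega
      rw [map_mul, map_pow, ev_C, hDqev x y hx, mul_pow]
      have h1 := hGeval n hn' x hx
      have hx3 : (2*x⁻¹^2*y + x⁻¹^3) * x^3 = 2*(x*y) + 1 := by
        field_simp
      have hpow : (x : ℂ)^(2*n+3) = (x^2)^n * x^3 := by rw [pow_add, pow_mul]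
      calc (2*(x*y) + 1) * (Polynomial.eval x (G n) *
            ((x^2)^n * (4*y^2 + 4*x⁻¹*y + x⁻¹^2 - x⁻¹*(4*x^2 + t)^2)^n))
          = ((2*x⁻¹^2*y + x⁻¹^3) * x^3) * (Polynomial.eval x (G n) *
            ((x^2)^n * (4*y^2 + 4*x⁻¹*y + x⁻¹^2 - x⁻¹*(4*x^2 + t)^2)^n)) := by rw [hx3]
        _ = (2*x⁻¹^2*y + x⁻¹^3) * (Polynomial.eval x (G n) *
            (((x^2)^n * x^3) * (4*y^2 + 4*x⁻¹*y + x⁻¹^2 - x⁻¹*(4*x^2 + t)^2)^n)) := by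
            ring
        _ = (2*x⁻¹^2*y + x⁻¹^3) * ((Polynomial.eval x (G n) * x^(2*n+3)) *
            (4*y^2 + 4*x⁻¹*y + x⁻¹^2 - x⁻¹*(4*x^2 + t)^2)^n) := by rw [hpow]; ring
        _ = (2*x⁻¹^2*y + x⁻¹^3) * ((x^R * Polynomial.eval x⁻¹ (g n)) *
            (4*y^2 + 4*x⁻¹*y + x⁻¹^2 - x⁻¹*(4*x^2 + t)^2)^n) := by rw [h1]
        _ = x^R * ((2*x⁻¹^2*y + x⁻¹^3) * (Polynomial.eval x⁻¹ (g n) *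
            (4*y^2 + 4*x⁻¹*y + x⁻¹^2 - x⁻¹*(4*x^2 + t)^2)^n)) := by ring
  have hPhiPsi : Phi = Psi t F G (M+1) (N+1) := by
    have h0 : ∀ x u : ℂ, x ≠ 0 → ev x u (Phi - Psi t F G (M+1) (N+1)) = 0 := by
      intro x u hx
      rw [map_sub]
      have hy : u = x * (u / x) := by field_simp
      rw [hy, hPhiEval x (u/x) hx, hPsiEv x (u/x) hx, sub_self]
    exact sub_eq_zero.mp (biv_eq_zero _ h0)
  obtain ⟨c, hc⟩ := core t R (M+1+(N+1)) (M+1) (N+1) F G le_rfl hFbound hGbound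
    (fun j a h => by rw [← hPhiPsi]; exact hPhiHM j a h)
  have hEvalH : ∀ x y : ℂ, x ≠ 0 → MvPolynomial.eval ![x,y] H = c := by
    intro x y hx
    have h1 := hPhiEval x y hx
    rw [hPhiPsi, hc, ev_C, Polynomial.eval_mul, Polynomial.eval_C, Polynomial.eval_pow,
      Polynomial.eval_X] at h1
    have hxR : (x:ℂ)^R ≠ 0 := pow_ne_zero _ hx
    have h2 : x^R * MvPolynomial.eval ![x,y] H = x^R * c := by rw [← h1]; ring
    exact mul_left_cancel₀ hxR h2
  have hHC : H = C c := by
    apply MvPolynomial.funext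
    intro v
    have hv : ![v 0, v 1] = v := by
      funext i
      fin_cases i <;> rfl
    set q : Polynomial ℂ := MvPolynomial.aeval ![Polynomial.X, Polynomial.C (v 1)] H
      with hqdef
    have hq : ∀ x : ℂ, Polynomial.eval x q = MvPolynomial.eval ![x, v 1] H := by
      intro x
      rw [hqdef, MvPolynomial.aeval_def]
      have hcl := MvPolynomial.eval₂_comp_left (Polynomial.evalRingHom x)
        (algebraMap ℂ (Polynomial ℂ)) (![Polynomial.X, Polynomial.C (v 1)]) H
      have hcomp : (Polynomial.evalRingHom x).comp (algebraMap ℂ (Polynomial ℂ))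
          = RingHom.id ℂ := by
        ext a
        simp
      have hfun : (⇑(Polynomial.evalRingHom x) ∘ ![Polynomial.X, Polynomial.C (v 1)])
          = ![x, v 1] := by
        funext i
        fin_cases i <;> simp
      rw [show Polynomial.eval x (MvPolynomial.eval₂ (algebraMap ℂ (Polynomial ℂ))
        ![Polynomial.X, Polynomial.C (v 1)] H) = (Polynomial.evalRingHom x)
        (MvPolynomial.eval₂ (algebraMap ℂ (Polynomial ℂ))
        ![Polynomial.X, Polynomial.C (v 1)] H) from rfl]
      rw [hcl, hcomp, hfun]
      rfl
    have hq0 : q - Polynomial.C c = 0 := by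
      apply eval_ne_zero_eq_zero
      intro x hx
      rw [Polynomial.eval_sub, Polynomial.eval_C, hq, hEvalH x (v 1) hx, sub_self]
    have hqv : Polynomial.eval (v 0) q = c := by
      have h3 := congrArg (Polynomial.eval (v 0)) hq0
      simp only [Polynomial.eval_sub, Polynomial.eval_C, Polynomial.eval_zero] at h3
      exact sub_eq_zero.mp h3
    rw [MvPolynomial.eval_C]
    rw [hq (v 0), hv] at hqv
    exact hqv
  refine ⟨c, hHC, ?_⟩
  intro x y hx
  rw [← hH x y hx, hHC, MvPolynomial.eval_C]
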